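/- Let f be a multivariate real polynomial in n variables with total degree d > 0. If f is bounded from below on the integer lattice, i.e. there exists B ∈ ℝ with f(x) ≥ B for all x ∈ ℤ^n, then the leading form f_d is positive semidefinite: f_d(x) ≥ 0 for all x ∈ ℝ^n. -/

import Mathlib

open MvPolynomial

lemma eval_mul_of_isHomogeneous' {n m : ℕ} (φ : MvPolynomial (Fin n) ℝ)
    (hφ : φ.IsHomogeneous m) (c : ℝ) (x : Fin n → ℝ) :
    eval (fun i => c * x i) φ = c ^ m * eval x φ := by
  rw [eval_eq, eval_eq, Finset.mul_sum]
  refine Finset.sum_congr rfl fun D hD => ?_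
  have hm : D.degree = m := by
    by_contra h
    exact mem_support_iff.mp hD (hφ.coeff_eq_zero h)
  have hm' : ∑ i ∈ D.support, D i = m := hm
  calc coeff D φ * ∏ i ∈ D.support, (c * x i) ^ D i
      = coeff D φ * ((∏ i ∈ D.support, c ^ D i) * ∏ i ∈ D.support, x i ^ D i) := by
        rw [← Finset.prod_mul_distrib]; simp_rw [mul_pow]
    _ = c ^ m * (coeff D φ * ∏ i ∈ D.support, x i ^ D i) := by
        rw [Finset.prod_pow_eq_pow_sum, hm']; ring

theorem leading_form_psd_of_bddBelow_on_lattice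
    {n : ℕ} (f : MvPolynomial (Fin n) ℝ) (d : ℕ)
    (hd : d = f.totalDegree) (hd0 : 0 < d)
    (B : ℝ) (hB : ∀ x : Fin n → ℤ, B ≤ eval (fun i => (x i : ℝ)) f) :
    ∀ x : Fin n → ℝ, 0 ≤ eval x (homogeneousComponent d f) := by
  intro x
  by_contra hneg
  push_neg at hneg
  set g := homogeneousComponent d f with hg
  -- Find a rational point where g is negative
  have hcont : Continuous fun y : Fin n → ℝ => eval y g := MvPolynomial.continuous_eval g
  have hopen : IsOpen {y : Fin n → ℝ | eval y g < 0} := isOpen_lt hcont continuous_const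
  have hdense : Dense (Set.pi Set.univ fun _ : Fin n => Set.range ((↑) : ℚ → ℝ)) :=
    dense_pi Set.univ (fun i _ => Rat.denseRange_cast)
  obtain ⟨q, hqD, hqU⟩ := hdense.exists_mem_open hopen ⟨x, hneg⟩
  have hq : ∀ i, q i ∈ Set.range ((↑) : ℚ → ℝ) := fun i => hqD i (Set.mem_univ i)
  choose r hr using hq
  -- Clear denominators
  set N : ℕ := ∏ i, (r i).den with hNdef
  have hNpos : 0 < N := Finset.prod_pos fun i _ => (r i).pos
  set a : Fin n → ℤ := fun i => (r i).num * ∏ j ∈ Finset.univ.erase i, ((r j).den : ℤ)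
    with ha_def
  have ha : ∀ i, (a i : ℝ) = (N : ℝ) * q i := by
    intro i
    have hden : ((r i).den : ℝ) ≠ 0 := Nat.cast_ne_zero.mpr (r i).den_nz
    have hNsplit : (N : ℝ) = ((r i).den : ℝ) * ∏ j ∈ Finset.univ.erase i, ((r j).den : ℝ) := by
      rw [hNdef]
      push_cast
      rw [← Finset.mul_prod_erase Finset.univ _ (Finset.mem_univ i)]
    rw [← hr i, Rat.cast_def, hNsplit, ha_def]
    push_cast
    field_simp
  -- g is negative at the integer point a
  have hga : eval (fun i => (a i : ℝ)) g = (N : ℝ) ^ d * eval q g := by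
    have := eval_mul_of_isHomogeneous' g (homogeneousComponent_isHomogeneous d f) (N : ℝ) q
    rw [← this, show (fun i => ((a i : ℝ))) = fun i => (N : ℝ) * q i from funext ha]
  have hNd : (0 : ℝ) < (N : ℝ) ^ d := by positivity
  have hganeg : eval (fun i => (a i : ℝ)) g < 0 := by
    rw [hga]
    exact mul_neg_of_pos_of_neg hNd hqU
  -- Build the one-variable polynomial k ↦ f(k • a)
  set c : ℕ → ℝ := fun j => eval (fun i => (a i : ℝ)) (homogeneousComponent j f) with hc
  set p : Polynomial ℝ := ∑ j ∈ Finset.range (d + 1), Polynomial.C (c j) * Polynomial.X ^ j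
    with hp
  have hcoeff : ∀ m, p.coeff m = if m < d + 1 then c m else 0 := by
    intro m
    rw [hp, Polynomial.finset_sum_coeff]
    simp only [Polynomial.coeff_C_mul, Polynomial.coeff_X_pow]
    rw [Finset.sum_congr rfl (fun j _ => by rw [mul_ite, mul_one, mul_zero])]
    simp [Finset.sum_ite_eq, Finset.mem_range, eq_comm]
  have hcd : p.coeff d = c d := by rw [hcoeff]; simp
  have hcdneg : p.coeff d < 0 := by rw [hcd, hc]; exact hganeg
  have hdegle : p.degree ≤ d := by
    rw [hp]
    refine (Polynomial.degree_sum_le _ _).trans ?_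
    rw [Finset.sup_le_iff]
    intro j hj
    refine (Polynomial.degree_C_mul_X_pow_le j (c j)).trans ?_
    exact_mod_cast Nat.le_of_lt_succ (Finset.mem_range.mp hj)
  have hdeg : p.degree = d :=
    Polynomial.degree_eq_of_le_of_coeff_ne_zero hdegle (ne_of_lt hcdneg)
  have hdegpos : 0 < p.degree := by rw [hdeg]; exact_mod_cast hd0
  have hlead : p.leadingCoeff ≤ 0 := by
    have hnat : p.natDegree = d := Polynomial.natDegree_eq_of_degree_eq_some hdeg
    rw [Polynomial.leadingCoeff, hnat]
    exact le_of_lt hcdneg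
  -- p.eval (k : ℝ) = f(k • a)
  have hkey : ∀ k : ℕ, p.eval (k : ℝ) = eval (fun i => ((k * a i : ℤ) : ℝ)) f := by
    intro k
    have hf : f = ∑ j ∈ Finset.range (d + 1), homogeneousComponent j f := by
      rw [hd]; exact (sum_homogeneousComponent f).symm
    conv_rhs => rw [hf]
    rw [map_sum, hp, Polynomial.eval_finset_sum]
    refine Finset.sum_congr rfl fun j hj => ?_
    have heq : (fun i => ((k * a i : ℤ) : ℝ)) = fun i => (k : ℝ) * (a i : ℝ) := by
      funext i; push_cast; ring
    rw [heq, eval_mul_of_isHomogeneous' _ (homogeneousComponent_isHomogeneous j f) (k : ℝ)]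
    rw [Polynomial.eval_mul, Polynomial.eval_C, Polynomial.eval_pow, Polynomial.eval_X, hc,
      mul_comm]
  -- f(k • a) → -∞, contradiction with the lower bound
  have htend : Filter.Tendsto (fun k : ℕ => p.eval (k : ℝ)) Filter.atTop Filter.atBot :=
    (p.tendsto_atBot_of_leadingCoeff_nonpos hdegpos hlead).comp
      tendsto_natCast_atTop_atTop
  obtain ⟨k, hk⟩ := (Filter.tendsto_atBot.mp htend (B - 1)).exists
  have hBk := hB (fun i => k * a i)
  rw [← hkey k] at hBk
  linarith
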